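/- Let κ be an uncountable cardinal that is regular and a strong limit, and assume that every coloring g of the two-element subsets of κ with two colors admits a homogeneous set of cardinality κ. Then for every set S of cardinality less than κ and every function f from the three-element subsets of κ to S, there is a set U ⊆ κ of cardinality κ that is homogeneous for f, i.e., f is constant on the three-element subsets of U. -/

import Mathlib

universe u

open Cardinal

open Ordinal Set

namespace Stmt13Aux

instance (o : Ordinal.{u}) : IsWellOrder o.ToType (· < ·) := isWellOrder_lt



variable {α : Type u} [LinearOrder α] [WellFoundedLT α] {S : Type u}

/-- membership of `r` in the Erdős–Rado tree chain below `t`. -/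
noncomputable def chainP (F : α → α → α → S) (t : α) : α → Prop :=
  (wellFounded_lt (α := α)).fix
    (fun r ih => r < t ∧ ∀ a b (ha : a < r) (hb : b < r), ih a ha → ih b hb → F a b r = F a b t)

theorem chainP_iff (F : α → α → α → S) (t r : α) :
    chainP F t r ↔ (r < t ∧ ∀ a b, a < r → b < r →
      chainP F t a → chainP F t b → F a b r = F a b t) := by
  rw [chainP, WellFounded.fix_eq]

variable {F : α → α → α → S}

theorem chainP.lt {t r : α} (h : chainP F t r) : r < t := ((chainP_iff F t r).1 h).1

theorem chainP.agree {t r : α} (h : chainP F t r) : ∀ a b, a < r → b < r →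
    chainP F t a → chainP F t b → F a b r = F a b t := ((chainP_iff F t r).1 h).2

theorem chainP_coh {t r : α} (h : chainP F t r) (s : α) :
    chainP F r s ↔ (chainP F t s ∧ s < r) := by
  induction s using (wellFounded_lt (α := α)).induction with
  | _ s IH =>
    constructor
    · intro h1
      have hsr : s < r := h1.lt
      refine ⟨(chainP_iff F t s).2 ⟨hsr.trans h.lt, fun a b ha hb hta htb => ?_⟩, hsr⟩
      have hra : chainP F r a := (IH a ha).2 ⟨hta, ha.trans hsr⟩
      have hrb : chainP F r b := (IH b hb).2 ⟨htb, hb.trans hsr⟩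
      have e1 : F a b s = F a b r := h1.agree a b ha hb hra hrb
      have e2 : F a b r = F a b t := h.agree a b (ha.trans hsr) (hb.trans hsr) hta htb
      exact e1.trans e2
    · rintro ⟨h2, hsr⟩
      refine (chainP_iff F r s).2 ⟨hsr, fun a b ha hb hra hrb => ?_⟩
      have hta : chainP F t a := ((IH a ha).1 hra).1
      have htb : chainP F t b := ((IH b hb).1 hrb).1
      have e1 : F a b s = F a b t := h2.agree a b ha hb hta htb
      have e2 : F a b r = F a b t := h.agree a b (ha.trans hsr) (hb.trans hsr) hta htb
      exact e1.trans e2.symm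

theorem chainP_trans {t r s : α} (h1 : chainP F t r) (h2 : chainP F r s) : chainP F t s :=
  ((chainP_coh h1 s).1 h2).1

theorem chainP_comp {t x y : α} (hx : chainP F t x) (hy : chainP F t y) (hxy : x < y) :
    chainP F y x := (chainP_coh hy x).2 ⟨hx, hxy⟩
/-- rank of a node in the tree -/
noncomputable def lvl (F : α → α → α → S) (t : α) : Ordinal.{u} :=
  (wellFounded_lt (α := α)).fix (C := fun _ => Ordinal.{u})
    (fun t ih => ⨆ r : {r : α // chainP F t r ∧ r < t}, Order.succ (ih r.1 r.2.2)) t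

theorem lvl_eq (F : α → α → α → S) (t : α) :
    lvl F t = ⨆ r : {r : α // chainP F t r ∧ r < t}, Order.succ (lvl F r.1) := by
  rw [lvl, WellFounded.fix_eq]
  rfl

theorem lvl_lt_of_chainP {t r : α} (h : chainP F t r) : lvl F r < lvl F t := by
  rw [lvl_eq F t]
  have := Ordinal.le_iSup (fun r : {r : α // chainP F t r ∧ r < t} => Order.succ (lvl F r.1))
    ⟨r, h, h.lt⟩
  exact (Order.lt_succ _).trans_le this

variable {κ : Cardinal.{u}}

theorem mk_Iio_lt (htype : @Ordinal.type α (· < ·) _ = κ.ord) (t : α) : #{r : α // r < t} < κ := by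
  have h1 : #{r : α // r < t} = (Ordinal.typein ((· < ·) : α → α → Prop) t).card := Ordinal.card_typein t
  rw [h1, ← Cardinal.lt_ord, ← htype]
  exact Ordinal.typein_lt_type _ t

theorem mk_chain_lt (htype : @Ordinal.type α (· < ·) _ = κ.ord) (t : α) :
    #{r : α // chainP F t r ∧ r < t} < κ :=
  (Cardinal.mk_subtype_le_of_subset (fun r h => h.2)).trans_lt (mk_Iio_lt htype t)

theorem lvl_lt_ord (hreg : κ.IsRegular) (htype : @Ordinal.type α (· < ·) _ = κ.ord) (t : α) :
    lvl F t < κ.ord := by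
  induction t using (wellFounded_lt (α := α)).induction with
  | _ t IH =>
    rw [lvl_eq F t]
    refine Ordinal.iSup_lt_ord ?_ fun i => ?_
    · rw [hreg.cof_eq]
      exact mk_chain_lt htype t
    · have := IH i.1 i.2.2
      exact (Cardinal.isSuccLimit_ord hreg.aleph0_le).succ_lt this

theorem exists_pred {β : Ordinal.{u}} : ∀ t : α, β < lvl F t →
    ∃ u, chainP F t u ∧ lvl F u = β := by
  intro t
  induction t using (wellFounded_lt (α := α)).induction with
  | _ t IH =>
    intro hβ
    rw [lvl_eq F t, Ordinal.lt_iSup_iff] at hβ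
    obtain ⟨⟨r, hr, hrt⟩, hlt⟩ := hβ
    rcases eq_or_lt_of_le (Order.lt_succ_iff.1 hlt) with heq | hlt'
    · exact ⟨r, hr, heq.symm⟩
    · obtain ⟨u, hu, hlu⟩ := IH r hrt hlt'
      exact ⟨u, chainP_trans hr hu, hlu⟩

theorem power_lt_of (hl : ℵ₀ ≤ κ) (hsl : κ.IsStrongLimit) {a b : Cardinal.{u}}
    (ha : a < κ) (hb : b < κ) : a ^ b < κ := by
  calc a ^ b ≤ (2 ^ a) ^ b := Cardinal.power_le_power_right (Cardinal.cantor a).le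
    _ = 2 ^ (a * b) := Cardinal.power_mul.symm
    _ < κ := hsl.two_power_lt (Cardinal.mul_lt_of_lt hl ha hb)

theorem mk_lvlLT_of (hreg : κ.IsRegular) {β : Ordinal.{u}} (hβ : β.card < κ)
    (h : ∀ γ, γ < β → #({t : α | lvl F t = γ} : Set α) < κ) :
    #({t : α | lvl F t < β} : Set α) < κ := by
  have hsub : {t : α | lvl F t < β} ⊆
      ⋃ i : β.ToType, {t : α | lvl F t = Ordinal.typein ((· < ·) : β.ToType → β.ToType → Prop) i} := by
    intro s hs
    have hs' : lvl F s < Ordinal.type ((· < ·) : β.ToType → β.ToType → Prop) := by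
      rw [Ordinal.type_toType]; exact hs
    obtain ⟨i, hi⟩ := Ordinal.typein_surj ((· < ·) : β.ToType → β.ToType → Prop) hs'
    exact Set.mem_iUnion.2 ⟨i, hi.symm⟩
  refine (Cardinal.mk_le_mk_of_subset hsub).trans_lt
    (Cardinal.mk_iUnion_le_sum_mk.trans_lt (Cardinal.sum_lt_of_isRegular hreg ?_ fun i => ?_))
  · rwa [Cardinal.mk_toType]
  · refine h _ ?_
    have := Ordinal.typein_lt_type ((· < ·) : β.ToType → β.ToType → Prop) i
    rwa [Ordinal.type_toType] at this

theorem mk_lvl_eq_lt (hreg : κ.IsRegular) (hsl : κ.IsStrongLimit) (hS : #S < κ)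
    (htype : @Ordinal.type α (· < ·) _ = κ.ord) (F : α → α → α → S) :
    ∀ β : Ordinal.{u}, #({t : α | lvl F t = β} : Set α) < κ := by
  intro β
  induction β using Ordinal.induction with
  | h β IH =>
    rcases isEmpty_or_nonempty (↥{t : α | lvl F t = β}) with he | hne
    · rw [Cardinal.mk_eq_zero]
      exact aleph0_pos.trans_le hreg.aleph0_le
    · obtain ⟨⟨t0, ht0⟩⟩ := hne
      have hβord : β < κ.ord := ht0 ▸ lvl_lt_ord hreg htype t0
      have hβ : β.card < κ := Cardinal.lt_ord.1 hβord
      have hX : #({t : α | lvl F t < β} : Set α) < κ := mk_lvlLT_of hreg hβ IH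
      set X := ({t : α | lvl F t < β} : Set α) with hXdef
      set L := ({t : α | lvl F t = β} : Set α) with hLdef
      have key : ∀ x y : ↥L, x.1 < y.1 →
          (fun (a b : ↥X) => F a.1 b.1 x.1) = (fun (a b : ↥X) => F a.1 b.1 y.1) → False := by
        intro x y hlt heq
        have hc : chainP F y.1 x.1 := by
          refine (chainP_iff F y.1 x.1).2 ⟨hlt, fun a b ha hb hca hcb => ?_⟩
          have hal : lvl F a < β := y.2 ▸ lvl_lt_of_chainP hca
          have hbl : lvl F b < β := y.2 ▸ lvl_lt_of_chainP hcb
          exact congrFun (congrFun heq ⟨a, hal⟩) ⟨b, hbl⟩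
        have := lvl_lt_of_chainP hc
        rw [x.2, y.2] at this
        exact lt_irrefl _ this
      have hinj : Function.Injective (fun (t : ↥L) (a b : ↥X) => F a.1 b.1 t.1) := by
        intro t t' heq
        rcases lt_trichotomy t.1 t'.1 with hlt | heqv | hgt
        · exact absurd heq fun heq => key t t' hlt heq
        · exact Subtype.ext heqv
        · exact absurd heq.symm fun heq => key t' t hgt heq
      refine (Cardinal.mk_le_of_injective hinj).trans_lt ?_
      have hcalc : #(↥X → ↥X → S) = #S ^ (#(↥X) * #(↥X)) := by
        calc #(↥X → ↥X → S) = #(↥X → S) ^ #(↥X) := (Cardinal.power_def _ _).symm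
          _ = (#S ^ #(↥X)) ^ #(↥X) := by rw [← Cardinal.power_def]
          _ = #S ^ (#(↥X) * #(↥X)) := Cardinal.power_mul.symm
      rw [hcalc]
      exact power_lt_of hreg.aleph0_le hsl hS (Cardinal.mul_lt_of_lt hreg.aleph0_le hX hX)

/-! ### Branches and splitting nodes -/

def Br (F : α → α → α → S) (x : α) : Set α := {r | chainP F x r ∨ r = x}

theorem Br_self (F : α → α → α → S) (x : α) : x ∈ Br F x := Or.inr rfl

theorem Br_iff_of_lt {x r s : α} (hr : r ∈ Br F x) (hs : s < r) :
    s ∈ Br F x ↔ chainP F r s := by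
  rcases hr with hr | rfl
  · constructor
    · rintro (hsx | rfl)
      · exact (chainP_coh hr s).2 ⟨hsx, hs⟩
      · exact absurd (hs.trans hr.lt) (lt_irrefl _)
    · intro h
      exact Or.inl ((chainP_coh hr s).1 h).1
  · constructor
    · rintro (hsx | rfl)
      · exact hsx
      · exact absurd hs (lt_irrefl _)
    · exact fun h => Or.inl h

theorem Br_comp {x u w : α} (hu : u ∈ Br F x) (hw : w ∈ Br F x) (huw : u < w) :
    chainP F w u := by
  rcases hw with hw | rfl
  · rcases hu with hu | rfl
    · exact chainP_comp hu hw huw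
    · exact absurd (hw.lt.trans huw) (lt_irrefl _)
  · rcases hu with hu | rfl
    · exact hu
    · exact absurd huw (lt_irrefl _)

def sdiffSet (F : α → α → α → S) (x y : α) : Set α := {r | ¬(r ∈ Br F x ↔ r ∈ Br F y)}

theorem sdiff_nonempty {x y : α} (h : x ∉ Br F y) : (sdiffSet F x y).Nonempty :=
  ⟨x, fun hiff => h (hiff.1 (Br_self F x))⟩

noncomputable def split (F : α → α → α → S) (x y : α) (h : (sdiffSet F x y).Nonempty) : α :=
  (wellFounded_lt (α := α)).min _ h

theorem split_mem {x y : α} (h : (sdiffSet F x y).Nonempty) :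
    ¬(split F x y h ∈ Br F x ↔ split F x y h ∈ Br F y) :=
  (wellFounded_lt (α := α)).min_mem _ h

theorem split_le {x y r : α} (h : (sdiffSet F x y).Nonempty)
    (hr : ¬(r ∈ Br F x ↔ r ∈ Br F y)) : split F x y h ≤ r :=
  le_of_not_gt fun hlt => (wellFounded_lt (α := α)).not_lt_min _ hr hlt

theorem split_min {x y r : α} (h : (sdiffSet F x y).Nonempty)
    (hr : r < split F x y h) : r ∈ Br F x ↔ r ∈ Br F y := by
  by_contra hc
  exact absurd hr (not_lt_of_ge (split_le h hc))

theorem common_lt_split {x y u : α} (h : (sdiffSet F x y).Nonempty)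
    (hux : u ∈ Br F x) (huy : u ∈ Br F y) : u < split F x y h := by
  rcases lt_trichotomy u (split F x y h) with hlt | heq | hgt
  · exact hlt
  · exact absurd (heq ▸ iff_of_true hux huy) (split_mem h)
  · exact absurd ((Br_iff_of_lt hux hgt).trans (Br_iff_of_lt huy hgt).symm) (split_mem h)

theorem convexity {x y z u : α} {V : Prop}
    (hxy : (sdiffSet F x y).Nonempty) (hyz : (sdiffSet F y z).Nonempty)
    (hxz : (sdiffSet F x z).Nonempty)
    (hVxy : split F x y hxy ∈ Br F y ↔ V) (hVyz : split F y z hyz ∈ Br F z ↔ V)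
    (hux : u ∈ Br F x) (huz : u ∈ Br F z) : u ∈ Br F y := by
  by_contra huy
  set d1 := split F x y hxy with hd1
  set d2 := split F y z hyz with hd2
  have hd1u : d1 ≤ u := split_le hxy (fun hiff => huy (hiff.1 hux))
  have hd2u : d2 ≤ u := split_le hyz (fun hiff => huy (hiff.2 huz))
  have hmem1 : ¬(d1 ∈ Br F x ↔ d1 ∈ Br F y) := split_mem hxy
  have hmem2 : ¬(d2 ∈ Br F y ↔ d2 ∈ Br F z) := split_mem hyz
  have hne : d1 ≠ d2 := by
    intro he
    rw [he] at hVxy hmem1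
    tauto
  have hltu : u < split F x z hxz := common_lt_split hxz hux huz
  rcases hne.lt_or_gt with hlt | hlt
  · have hagree : d1 ∈ Br F y ↔ d1 ∈ Br F z := split_min hyz hlt
    have hmem3 : ¬(d1 ∈ Br F x ↔ d1 ∈ Br F z) := fun hiff => hmem1 (hiff.trans hagree.symm)
    exact absurd ((hltu.trans_le (split_le hxz hmem3)).trans_le hd1u) (lt_irrefl _)
  · have hagree : d2 ∈ Br F x ↔ d2 ∈ Br F y := split_min hxy hlt
    have hmem3 : ¬(d2 ∈ Br F x ↔ d2 ∈ Br F z) := fun hiff => hmem2 ((hagree.symm.trans hiff))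
    exact absurd ((hltu.trans_le (split_le hxz hmem3)).trans_le hd2u) (lt_irrefl _)

/-! ### auxiliary cardinality tools -/

theorem unbounded_of_mk_eq (hl : ℵ₀ ≤ κ) (htype : @Ordinal.type α (· < ·) _ = κ.ord)
    {D : Set α} (hD : #D = κ) (t : α) : ∃ x ∈ D, t < x := by
  by_contra hc
  push_neg at hc
  have hsub : D ⊆ {r : α | r < t} ∪ {t} := by
    intro x hx
    rcases lt_or_eq_of_le (hc x hx) with h | h
    · exact Or.inl h
    · exact Or.inr h
  have hle := (Cardinal.mk_le_mk_of_subset hsub).trans (Cardinal.mk_union_le _ _)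
  rw [hD] at hle
  have h1 : #({r : α | r < t} : Set α) < κ := mk_Iio_lt htype t
  have h2 : #({t} : Set α) < κ := by
    rw [Cardinal.mk_singleton]
    exact one_lt_aleph0.trans_le hl
  exact absurd (Cardinal.add_lt_of_lt hl h1 h2) (not_lt_of_ge hle)

theorem exists_big_fiber {X ι : Type u} (hreg : κ.IsRegular) (hι : #ι < κ) (hX : κ ≤ #X)
    (g : X → ι) : ∃ i, κ ≤ #{x : X // g x = i} := by
  by_contra hc
  push_neg at hc
  have he : #X = Cardinal.sum fun i => #{x : X // g x = i} := by
    rw [← Cardinal.mk_sigma]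
    exact Cardinal.mk_congr (Equiv.sigmaFiberEquiv g).symm
  rw [he] at hX
  exact absurd (Cardinal.sum_lt_of_isRegular hreg hι fun i => hc i) (not_lt_of_ge hX)

theorem chainQuad {C : Set α} (hC : ∀ x ∈ C, ∀ y ∈ C, x < y → chainP F y x) :
    ∀ a ∈ C, ∀ b ∈ C, ∀ c ∈ C, ∀ d ∈ C, a < c → b < c → c < d → F a b c = F a b d := by
  intro a ha b hb c hc d hd hac hbc hcd
  exact (hC c hc d hd hcd).agree a b hac hbc (hC a ha d hd (hac.trans hcd))
    (hC b hb d hd (hbc.trans hcd))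

/-! ### relativized pair homogeneity -/

theorem pairHom (hcard : #α = κ)
    (hp : ∀ b : α → α → Bool, ∃ H : Set α, #H = κ ∧
      ∃ v, ∀ x ∈ H, ∀ y ∈ H, x < y → b x y = v)
    (A : Set α) (hA : #A = κ) (b : α → α → Bool) :
    ∃ B : Set α, B ⊆ A ∧ #B = κ ∧ ∃ v, ∀ x ∈ B, ∀ y ∈ B, x < y → b x y = v := by
  obtain ⟨e⟩ : Nonempty (α ≃ ↥A) := Cardinal.eq.1 (hcard.trans hA.symm)
  set b' : α → α → Bool := fun x y =>
    if (e x : α) < (e y : α) then b (e x) (e y) else b (e y) (e x) with hb'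
  obtain ⟨H, hH, v, hv⟩ := hp b'
  refine ⟨Subtype.val '' (e '' H), ?_, ?_, v, ?_⟩
  · rintro _ ⟨⟨a, hainA⟩, _, rfl⟩
    exact hainA
  · rw [Cardinal.mk_image_eq Subtype.val_injective, Cardinal.mk_image_eq e.injective, hH]
  · rintro x hx y hy hxy
    obtain ⟨p, ⟨x', hx', rfl⟩, rfl⟩ := hx
    obtain ⟨q, ⟨y', hy', rfl⟩, rfl⟩ := hy
    have hne : x' ≠ y' := by
      intro h
      rw [h] at hxy
      exact lt_irrefl _ hxy
    rcases hne.lt_or_gt with h | h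
    · have hvv := hv x' hx' y' hy' h
      rw [hb'] at hvv
      simp only [] at hvv
      rwa [if_pos hxy] at hvv
    · have hvv := hv y' hy' x' hx' h
      rw [hb'] at hvv
      simp only [] at hvv
      rwa [if_neg (asymm hxy)] at hvv

/-! ### main tree argument -/

theorem ERchainAbs (hreg : κ.IsRegular) (hsl : κ.IsStrongLimit) (hS : #S < κ)
    (htype : @Ordinal.type α (· < ·) _ = κ.ord)
    (hp : ∀ b : α → α → Bool, ∃ H : Set α, #H = κ ∧
      ∃ v, ∀ x ∈ H, ∀ y ∈ H, x < y → b x y = v)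
    (F : α → α → α → S) :
    ∃ C : Set α, #C = κ ∧
      ∀ a ∈ C, ∀ b ∈ C, ∀ c ∈ C, ∀ d ∈ C, a < c → b < c → c < d → F a b c = F a b d := by
  classical
  have hl := hreg.aleph0_le
  have hcard : #α = κ := by
    have h1 : (κ.ord).card = #α := by
      rw [← htype]
      exact Ordinal.card_type _
    rw [Cardinal.card_ord] at h1
    exact h1.symm
  obtain ⟨H₁, -, hH₁, v1, hv1⟩ := pairHom hcard hp Set.univ (by rw [Cardinal.mk_univ]; exact hcard)
    (fun x y => decide (chainP F y x))
  cases v1 with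
  | true =>
    have hcomp : ∀ x ∈ H₁, ∀ y ∈ H₁, x < y → chainP F y x := fun x hx y hy hxy =>
      of_decide_eq_true (hv1 x hx y hy hxy)
    exact ⟨H₁, hH₁, chainQuad hcomp⟩
  | false =>
    have hinc : ∀ x ∈ H₁, ∀ y ∈ H₁, x < y → ¬ chainP F y x := fun x hx y hy hxy =>
      of_decide_eq_false (hv1 x hx y hy hxy)
    have hhost : ∀ x ∈ H₁, ∀ y ∈ H₁, x < y → x ∉ Br F y := by
      rintro x hx y hy hxy (h | rfl)
      · exact hinc x hx y hy hxy h
      · exact lt_irrefl _ hxy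
    obtain ⟨H₂, hH₂A, hH₂, v2, hv2⟩ := pairHom hcard hp H₁ hH₁
      (fun x y => if h : (sdiffSet F x y).Nonempty then decide (split F x y h ∈ Br F y) else true)
    have hhost2 : ∀ x ∈ H₂, ∀ y ∈ H₂, x < y → (sdiffSet F x y).Nonempty :=
      fun x hx y hy hxy => sdiff_nonempty (hhost x (hH₂A hx) y (hH₂A hy) hxy)
    have hmatch : ∀ x, ∀ hx : x ∈ H₂, ∀ y, ∀ hy : y ∈ H₂, ∀ hxy : x < y,
        (split F x y (hhost2 x hx y hy hxy) ∈ Br F y ↔ (v2 = true)) := by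
      intro x hx y hy hxy
      have hvv := hv2 x hx y hy hxy
      rw [dif_pos (hhost2 x hx y hy hxy)] at hvv
      rw [← hvv]
      exact decide_eq_true_iff.symm
    set I : α → Set α := fun u => {x | x ∈ H₂ ∧ u ∈ Br F x} with hI
    have hconv : ∀ u, ∀ x ∈ I u, ∀ z ∈ I u, ∀ y ∈ H₂, x < y → y < z → y ∈ I u := by
      intro u x hx z hz y hy hxy hyz
      exact ⟨hy, convexity (hhost2 x hx.1 y hy hxy) (hhost2 y hy z hz.1 hyz)
        (hhost2 x hx.1 z hz.1 (hxy.trans hyz))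
        (hmatch x hx.1 y hy hxy) (hmatch y hy z hz.1 hyz) hx.2 hz.2⟩
    set C := {u : α | #(I u) = κ} with hCdef
    have hcommon : ∀ u ∈ C, ∀ w ∈ C, ∃ x, x ∈ I u ∧ x ∈ I w := by
      intro u hu w hw
      have hune : (I u).Nonempty := by
        rw [← Set.nonempty_coe_sort, ← Cardinal.mk_ne_zero_iff, hu]
        exact (aleph0_pos.trans_le hl).ne'
      have hwne : (I w).Nonempty := by
        rw [← Set.nonempty_coe_sort, ← Cardinal.mk_ne_zero_iff, hw]
        exact (aleph0_pos.trans_le hl).ne'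
      obtain ⟨a, ha⟩ := hune
      obtain ⟨c, hc⟩ := hwne
      rcases le_total a c with hac | hca
      · obtain ⟨z, hz, hcz⟩ := unbounded_of_mk_eq hl htype hu c
        rcases eq_or_lt_of_le hac with heq | hac'
        · exact ⟨c, heq ▸ ha, hc⟩
        · exact ⟨c, hconv u a ha z hz c hc.1 hac' hcz, hc⟩
      · obtain ⟨z, hz, haz⟩ := unbounded_of_mk_eq hl htype hw a
        rcases eq_or_lt_of_le hca with heq | hca'
        · exact ⟨a, ha, heq ▸ hc⟩
        · exact ⟨a, ha, hconv w c hc z hz a ha.1 hca' haz⟩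
    have hcomp : ∀ u ∈ C, ∀ w ∈ C, u < w → chainP F w u := by
      intro u hu w hw huw
      obtain ⟨x, hxu, hxw⟩ := hcommon u hu w hw
      exact Br_comp hxu.2 hxw.2 huw
    have hpick : ∀ t : α, ∃ u : α, #(I u) = κ ∧
        lvl F u = Ordinal.typein ((· < ·) : α → α → Prop) t := by
      intro t
      set β := Ordinal.typein ((· < ·) : α → α → Prop) t with hβdef
      have hsmall : #({x : α | lvl F x < β + 1} : Set α) < κ := by
        refine mk_lvlLT_of hreg ?_ (fun γ _ => mk_lvl_eq_lt hreg hsl hS htype F γ)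
        have h1 : β < κ.ord := by
          rw [← htype]
          exact Ordinal.typein_lt_type _ t
        have h2 : β + 1 < κ.ord := by
          rw [Ordinal.add_one_eq_succ]
          exact (Cardinal.isSuccLimit_ord hl).succ_lt h1
        exact Cardinal.lt_ord.1 h2
      set big := {x : α | x ∈ H₂ ∧ β < lvl F x} with hbigdef
      have hbigκ : κ ≤ #big := by
        by_contra hlt
        push_neg at hlt
        have hsub : H₂ ⊆ big ∪ {x : α | lvl F x < β + 1} := by
          intro x hx
          rcases lt_or_ge β (lvl F x) with h | h
          · exact Or.inl ⟨hx, h⟩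
          · refine Or.inr ?_
            show lvl F x < β + 1
            rw [Ordinal.add_one_eq_succ, Order.lt_succ_iff]
            exact h
        have hle := (Cardinal.mk_le_mk_of_subset hsub).trans (Cardinal.mk_union_le _ _)
        rw [hH₂] at hle
        exact absurd (Cardinal.add_lt_of_lt hl hlt hsmall) (not_lt_of_ge hle)
      have hex : ∀ x : ↥big, ∃ u : α, chainP F x.1 u ∧ lvl F u = β :=
        fun x => exists_pred x.1 x.2.2
      choose pr hpr1 hpr2 using hex
      obtain ⟨⟨u, hu⟩, hfib⟩ := exists_big_fiber hreg
        (mk_lvl_eq_lt hreg hsl hS htype F β) hbigκ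
        (fun x : ↥big => (⟨pr x, hpr2 x⟩ : {u : α // lvl F u = β}))
      refine ⟨u, le_antisymm ((Cardinal.mk_set_le _).trans_eq hcard) ?_, hu⟩
      have hIu : ∀ y : ↥big, pr y = u → y.1 ∈ I u := by
        intro y hy
        exact ⟨y.2.1, Or.inl (hy ▸ hpr1 y)⟩
      refine le_trans hfib (Cardinal.mk_le_of_injective
        (f := fun x : {x : ↥big // (⟨pr x, hpr2 x⟩ : {u : α // lvl F u = β}) = ⟨u, hu⟩} =>
          (⟨x.1.1, hIu x.1 (congrArg Subtype.val x.2)⟩ : ↥(I u))) ?_)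
      intro a b hab
      have h5 : (a.1.1 : α) = b.1.1 := congrArg (fun z : ↥(I u) => z.1) hab
      exact Subtype.ext (Subtype.ext h5)
    choose uof huof1 huof2 using hpick
    have hinj : Function.Injective (fun t : α => (⟨uof t, huof1 t⟩ : ↥C)) := by
      intro t t' h
      have h2 := congrArg (fun z : ↥C => lvl F z.1) h
      simp only [] at h2
      rw [huof2 t, huof2 t'] at h2
      exact Ordinal.typein_injective _ h2
    have hCκ : #C = κ := le_antisymm ((Cardinal.mk_set_le _).trans_eq hcard)
      (by rw [← hcard]; exact Cardinal.mk_le_of_injective hinj)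
    exact ⟨C, hCκ, chainQuad hcomp⟩

theorem ERchainRel (hreg : κ.IsRegular) (hsl : κ.IsStrongLimit) (hS : #S < κ)
    (htype : @Ordinal.type α (· < ·) _ = κ.ord)
    (hp : ∀ b : α → α → Bool, ∃ H : Set α, #H = κ ∧
      ∃ v, ∀ x ∈ H, ∀ y ∈ H, x < y → b x y = v)
    (A : Set α) (hA : #A = κ) (F : α → α → α → S) :
    ∃ C : Set α, C ⊆ A ∧ #C = κ ∧
      ∀ a ∈ C, ∀ b ∈ C, ∀ c ∈ C, ∀ d ∈ C, a < c → b < c → c < d → F a b c = F a b d := by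
  have h1 : @Ordinal.type ↥A (· < ·) _ = κ.ord := by
    apply le_antisymm
    · rw [← htype]
      exact RelEmbedding.ordinal_type_le
        ⟨⟨Subtype.val, Subtype.val_injective⟩, Subtype.coe_lt_coe⟩
    · rw [Cardinal.ord_le]
      have h2 : (@Ordinal.type ↥A (· < ·) _).card = #↥A := Ordinal.card_type _
      rw [h2]
      exact le_of_eq hA.symm
  obtain ⟨e⟩ : Nonempty (((· < ·) : α → α → Prop) ≃r ((· < ·) : ↥A → ↥A → Prop)) :=
    Ordinal.type_eq.1 (htype.trans h1.symm)
  set g : α → α := fun x => (e x).1 with hgdef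
  have hg : StrictMono g := fun x y hxy => Subtype.coe_lt_coe.2 (e.map_rel_iff.2 hxy)
  obtain ⟨C', hC', hquad⟩ := ERchainAbs hreg hsl hS htype hp (fun a b c => F (g a) (g b) (g c))
  refine ⟨g '' C', ?_, ?_, ?_⟩
  · rintro _ ⟨x, -, rfl⟩
    exact (e x).2
  · rw [Cardinal.mk_image_eq hg.injective, hC']
  · rintro _ ⟨a', ha', rfl⟩ _ ⟨b', hb', rfl⟩ _ ⟨c', hc', rfl⟩ _ ⟨d', hd', rfl⟩ hac hbc hcd
    exact hquad a' ha' b' hb' c' hc' d' hd' (hg.lt_iff_lt.1 hac) (hg.lt_iff_lt.1 hbc)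
      (hg.lt_iff_lt.1 hcd)

/-! ### Finset helpers -/

def pairEval (b : α → α → Bool) (s : Finset α) : Bool :=
  if h : s.Nonempty then
    (if h2 : (s.erase (s.min' h)).Nonempty then
      b (s.min' h) ((s.erase (s.min' h)).min' h2) else true)
  else true

theorem pairEval_pair {b : α → α → Bool} {x y : α} (hxy : x < y) :
    pairEval b {x, y} = b x y := by
  have h1 : ({x, y} : Finset α).Nonempty := ⟨x, by simp⟩
  have hmin : ({x, y} : Finset α).min' h1 = x := by
    apply le_antisymm
    · exact Finset.min'_le _ x (by simp)
    · refine Finset.le_min' _ _ _ ?_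
      intro z hz
      rcases Finset.mem_insert.1 hz with rfl | hz'
      · exact le_refl z
      · rw [Finset.mem_singleton.1 hz']
        exact hxy.le
  have herase : ({x, y} : Finset α).erase x = {y} :=
    Finset.erase_insert (by simp [hxy.ne])
  rw [pairEval, dif_pos h1, hmin, herase, dif_pos (Finset.singleton_nonempty y),
    Finset.min'_singleton]

theorem card_three {s : Finset α} (h : s.card = 3) :
    ∃ a b c : α, a < b ∧ b < c ∧ s = {a, b, c} := by
  obtain ⟨a, b, c, hab, hac, hbc, rfl⟩ := Finset.card_eq_three.1 h
  have perm : ∀ x y z : α, ({x, y, z} : Finset α) = {y, x, z} := by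
    intro x y z
    ext w
    simp only [Finset.mem_insert, Finset.mem_singleton]
    tauto
  have perm2 : ∀ x y z : α, ({x, y, z} : Finset α) = {x, z, y} := by
    intro x y z
    ext w
    simp only [Finset.mem_insert, Finset.mem_singleton]
    tauto
  rcases lt_or_gt_of_ne hab with h1 | h1 <;> rcases lt_or_gt_of_ne hac with h2 | h2 <;>
    rcases lt_or_gt_of_ne hbc with h3 | h3
  · exact ⟨a, b, c, h1, h3, rfl⟩
  · exact ⟨a, c, b, h2, h3, perm2 a b c⟩
  · exact absurd (h2.trans (h1.trans h3)) (lt_irrefl _)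
  · exact ⟨c, a, b, h2, h1, (perm2 a b c).trans (perm a c b)⟩
  · exact ⟨b, a, c, h1, h2, perm a b c⟩
  · exact absurd (h1.trans h2) (not_lt_of_gt h3)
  · exact ⟨b, c, a, h3, h2, (perm a b c).trans (perm2 b a c)⟩
  · exact ⟨c, b, a, h3, h1, (perm a b c).trans ((perm2 b a c).trans (perm b c a))⟩

end Stmt13Aux

open Stmt13Aux in
/-- Let `κ` be an uncountable cardinal which is regular and a strong limit (i.e. inaccessible),
and assume that every 2-coloring of the two-element subsets of (a canonical type of
cardinality) `κ` has a homogeneous set of cardinality `κ` (the defining partition property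
of a weakly compact cardinal).  Then for every set `S` of cardinality `< κ` and every
coloring `f` of the three-element subsets with colors in `S` there is a set `U` of
cardinality `κ` homogeneous for `f`: `f` is constant on the three-element subsets of `U`. -/
theorem stmt13 (κ : Cardinal.{u}) (huncount : ℵ₀ < κ)
    (hreg : κ.IsRegular) (hstrong : κ.IsStrongLimit)
    (hpairs : ∀ g : Finset κ.ord.ToType → Bool,
      ∃ H : Set κ.ord.ToType, Cardinal.mk H = κ ∧
        ∀ s : Finset κ.ord.ToType, ↑s ⊆ H → s.card = 2 →
          ∀ t : Finset κ.ord.ToType, ↑t ⊆ H → t.card = 2 → g s = g t)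
    (S : Type u) (hS : Cardinal.mk S < κ) (f : Finset κ.ord.ToType → S) :
    ∃ U : Set κ.ord.ToType, Cardinal.mk U = κ ∧
      ∀ s : Finset κ.ord.ToType, ↑s ⊆ U → s.card = 3 →
        ∀ t : Finset κ.ord.ToType, ↑t ⊆ U → t.card = 3 → f s = f t := by
  classical
  have hl : ℵ₀ ≤ κ := hreg.aleph0_le
  have htype : @Ordinal.type κ.ord.ToType (· < ·) _ = κ.ord := Ordinal.type_toType _
  have hmkα : #κ.ord.ToType = κ := Cardinal.mk_ord_toType κ
  have hp : ∀ b : κ.ord.ToType → κ.ord.ToType → Bool, ∃ H : Set κ.ord.ToType, #H = κ ∧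
      ∃ v, ∀ x ∈ H, ∀ y ∈ H, x < y → b x y = v := by
    intro b
    obtain ⟨H, hH, hom⟩ := hpairs (pairEval b)
    refine ⟨H, hH, ?_⟩
    have hinf : H.Infinite := by
      rw [← Set.infinite_coe_iff]
      exact Cardinal.infinite_iff.2 (by rw [hH]; exact hl)
    obtain ⟨x0, hx0, y0, hy0, hne⟩ := hinf.nontrivial
    obtain ⟨p0, q0, hp0, hq0, hpq⟩ : ∃ p q, p ∈ H ∧ q ∈ H ∧ p < q := by
      rcases hne.lt_or_gt with h0 | h0
      · exact ⟨x0, y0, hx0, hy0, h0⟩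
      · exact ⟨y0, x0, hy0, hx0, h0⟩
    refine ⟨b p0 q0, ?_⟩
    intro x hx y hy hxy
    have hcard2 : ∀ u w : κ.ord.ToType, u < w → ({u, w} : Finset _).card = 2 := by
      intro u w h
      rw [Finset.card_insert_of_notMem (by simp [h.ne]), Finset.card_singleton]
    have hsub : ∀ u w : κ.ord.ToType, u ∈ H → w ∈ H →
        (↑({u, w} : Finset _) : Set _) ⊆ H := by
      intro u w hu hw z hz
      simp only [Finset.coe_insert, Finset.coe_singleton, Set.mem_insert_iff,
        Set.mem_singleton_iff] at hz
      rcases hz with rfl | rfl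
      · exact hu
      · exact hw
    have hcalc := hom {x, y} (hsub x y hx hy) (hcard2 x y hxy)
      {p0, q0} (hsub p0 q0 hp0 hq0) (hcard2 p0 q0 hpq)
    rwa [pairEval_pair hxy, pairEval_pair hpq] at hcalc
  obtain ⟨C₁, hC₁, hquad3⟩ := ERchainAbs hreg hstrong hS htype hp
    (fun a b c => f {a, b, c})
  have claim1 : ∀ a ∈ C₁, ∀ b ∈ C₁, a < b → ∀ c ∈ C₁, ∀ d ∈ C₁, b < c → b < d →
      f {a, b, c} = f {a, b, d} := by
    intro a ha b hb hab c hc d hd hbc hbd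
    rcases lt_trichotomy c d with h | h | h
    · exact hquad3 a ha b hb c hc d hd (hab.trans hbc) hbc h
    · rw [h]
    · exact (hquad3 a ha b hb d hd c hc (hab.trans hbd) hbd h).symm
  have hub1 : ∀ t, ∃ x, x ∈ C₁ ∧ t < x := by
    intro t
    obtain ⟨x, hx, ht⟩ := unbounded_of_mk_eq hl htype hC₁ t
    exact ⟨x, hx, ht⟩
  choose υ hυ1 hυ2 using hub1
  obtain ⟨C₂, hC₂sub, hC₂, hquad2⟩ := ERchainRel hreg hstrong hS htype hp C₁ hC₁
    (fun a _ c => f {a, c, υ c})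
  have claim2 : ∀ a ∈ C₂, ∀ c ∈ C₂, ∀ d ∈ C₂, a < c → a < d →
      f {a, c, υ c} = f {a, d, υ d} := by
    intro a ha c hc d hd hac had
    rcases lt_trichotomy c d with h | h | h
    · exact hquad2 a ha a ha c hc d hd hac hac h
    · rw [h]
    · exact (hquad2 a ha a ha d hd c hc had had h).symm
  have hub2 : ∀ t, ∃ x, x ∈ C₂ ∧ t < x := by
    intro t
    obtain ⟨x, hx, ht⟩ := unbounded_of_mk_eq hl htype hC₂ t
    exact ⟨x, hx, ht⟩
  choose π hπ1 hπ2 using hub2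
  obtain ⟨s₀, hs₀⟩ := exists_big_fiber hreg hS (le_of_eq hC₂.symm)
    (fun x : ↥C₂ => f {x.1, π x.1, υ (π x.1)})
  set U : Set κ.ord.ToType := {a | a ∈ C₂ ∧ f {a, π a, υ (π a)} = s₀} with hUdef
  have hUκ : #U = κ := by
    refine le_antisymm ((Cardinal.mk_set_le _).trans_eq hmkα) ?_
    refine le_trans hs₀ (Cardinal.mk_le_of_injective
      (f := fun x : {x : ↥C₂ // f {x.1, π x.1, υ (π x.1)} = s₀} =>
        (⟨x.1.1, x.1.2, x.2⟩ : ↥U)) ?_)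
    intro a b hab
    have h5 : (a.1.1 : κ.ord.ToType) = b.1.1 := congrArg (fun z : ↥U => z.1) hab
    exact Subtype.ext (Subtype.ext h5)
  have key : ∀ s : Finset κ.ord.ToType, ↑s ⊆ U → s.card = 3 → f s = s₀ := by
    intro s hsub3 hcard3
    obtain ⟨a, b, c, hab, hbc, rfl⟩ := card_three hcard3
    have haU : a ∈ U := hsub3 (by simp)
    have hbU : b ∈ U := hsub3 (by simp)
    have hcU : c ∈ U := hsub3 (by simp)
    have h1 : f {a, b, c} = f {a, b, υ b} :=
      claim1 a (hC₂sub haU.1) b (hC₂sub hbU.1) hab c (hC₂sub hcU.1) (υ b) (hυ1 b) hbc (hυ2 b)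
    have h2 : f {a, b, υ b} = f {a, π a, υ (π a)} :=
      claim2 a haU.1 b hbU.1 (π a) (hπ1 a) hab (hπ2 a)
    rw [h1, h2]
    exact haU.2
  refine ⟨U, hUκ, ?_⟩
  intro s hs hcs t ht hct
  rw [key s hs hcs, key t ht hct]
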